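/- arXiv:1905.08127 — 2 statements merged into one kernel-verified Lean document; each statement's English description precedes it below -/
import Mathlib

section
/- Let V be a finite nonempty type, w : V → V → ℕ∞, q : ℕ with q ≥ 1, and let w_q be the augmented graph on V ⊕ Bool. Then rad_w < 2q if and only if there exists a vertex p : V ⊕ Bool with ecc_{w_q}(p) ≠ diam_{w_q} (i.e., the augmented graph has a vertex that is not an endpoint of a diameter). -/
/-- Weight of a walk starting at `u` and visiting the vertices of `p` in order. -/
def walkWeight {V : Type*} (w : V → V → ℕ∞) : V → List V → ℕ∞
  | _, [] => 0
  | u, x :: xs => w u x + walkWeight w x xs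

/-- Shortest-path distance: infimum of weights of walks from `u` to `v`. -/
noncomputable def gdist {V : Type*} (w : V → V → ℕ∞) (u v : V) : ℕ∞ :=
  ⨅ (p : List V) (_ : (u :: p).getLast (List.cons_ne_nil u p) = v), walkWeight w u p

/-- Eccentricity of a vertex. -/
noncomputable def ecc {V : Type*} (w : V → V → ℕ∞) (v : V) : ℕ∞ :=
  ⨆ u, gdist w v u

/-- Radius. -/
noncomputable def rad {V : Type*} (w : V → V → ℕ∞) : ℕ∞ :=
  ⨅ v, ecc w v

/-- Diameter. -/
noncomputable def diam {V : Type*} (w : V → V → ℕ∞) : ℕ∞ :=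
  ⨆ v, ecc w v

/-- Augmented graph on `V ⊕ Bool`: two extra vertices `x = inr false`, `y = inr true`
connected to every original vertex (in both directions) by edges of weight `q`. -/
def aug {V : Type*} (w : V → V → ℕ∞) (q : ℕ) : V ⊕ Bool → V ⊕ Bool → ℕ∞
  | Sum.inl u, Sum.inl v => w u v
  | Sum.inl _, Sum.inr _ => (q : ℕ∞)
  | Sum.inr _, Sum.inl _ => (q : ℕ∞)
  | Sum.inr _, Sum.inr _ => ⊤

section Aux

open Sum

variable {V : Type*} (w : V → V → ℕ∞) (q : ℕ)

lemma gdist_le {u v : V} (p : List V) (h : (u :: p).getLast (List.cons_ne_nil u p) = v) :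
    gdist w u v ≤ walkWeight w u p :=
  iInf₂_le p h

lemma gdist_self (v : V) : gdist w v v = 0 :=
  le_antisymm (by simpa [walkWeight] using gdist_le w ([] : List V) (by simp)) (zero_le)

lemma walkWeight_map (u : V) (p : List V) :
    walkWeight (aug w q) (Sum.inl u) (p.map Sum.inl) = walkWeight w u p := by
  induction p generalizing u with
  | nil => rfl
  | cons a t ih => simp [walkWeight, aug, ih]

lemma gdist_aug_inl_le (u v : V) :
    gdist (aug w q) (inl u) (inl v) ≤ gdist w u v := by
  refine le_iInf₂ fun p hp => ?_
  have hlast : ((inl u : V ⊕ Bool) :: p.map inl).getLast (List.cons_ne_nil _ _) = inl v := by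
    have h2 := List.getLast_map (f := (inl : V → V ⊕ Bool)) (l := u :: p) (by simp)
    exact h2.trans (congrArg inl hp)
  calc gdist (aug w q) (inl u) (inl v) ≤ walkWeight (aug w q) (inl u) (p.map inl) :=
        gdist_le _ _ hlast
    _ = walkWeight w u p := walkWeight_map w q u p

lemma gdist_aug_inl_inr (u : V) (b : Bool) :
    gdist (aug w q) (inl u) (inr b) ≤ (q : ℕ∞) := by
  have := gdist_le (aug w q) ([inr b] : List (V ⊕ Bool)) (u := inl u) (v := inr b) (by simp)
  simpa [walkWeight, aug] using this

lemma gdist_aug_inr_inl (b : Bool) (u : V) :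
    gdist (aug w q) (inr b) (inl u) ≤ (q : ℕ∞) := by
  have := gdist_le (aug w q) ([inl u] : List (V ⊕ Bool)) (u := inr b) (v := inl u) (by simp)
  simpa [walkWeight, aug] using this

lemma gdist_aug_inl_inl_le (u v : V) :
    gdist (aug w q) (inl u) (inl v) ≤ ((2 * q : ℕ) : ℕ∞) := by
  have := gdist_le (aug w q) ([inr false, inl v] : List (V ⊕ Bool)) (u := inl u) (v := inl v)
    (by simp)
  calc gdist (aug w q) (inl u) (inl v)
      ≤ walkWeight (aug w q) (inl u) [inr false, inl v] := this
    _ = (q : ℕ∞) + ((q : ℕ∞) + 0) := by simp [walkWeight, aug]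
    _ = ((2 * q : ℕ) : ℕ∞) := by push_cast; ring

lemma gdist_aug_inr_inr_le [Nonempty V] (b b' : Bool) :
    gdist (aug w q) (inr b) (inr b') ≤ ((2 * q : ℕ) : ℕ∞) := by
  obtain ⟨v⟩ := ‹Nonempty V›
  have := gdist_le (aug w q) ([inl v, inr b'] : List (V ⊕ Bool)) (u := inr b) (v := inr b')
    (by simp)
  calc gdist (aug w q) (inr b) (inr b')
      ≤ walkWeight (aug w q) (inr b) [inl v, inr b'] := this
    _ = (q : ℕ∞) + ((q : ℕ∞) + 0) := by simp [walkWeight, aug]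
    _ = ((2 * q : ℕ) : ℕ∞) := by push_cast; ring

/-- Any nonempty walk starting at an `inr` vertex has weight at least `q`. -/
lemma weight_from_inr (b : Bool) (p : List (V ⊕ Bool)) (hp : p ≠ []) :
    (q : ℕ∞) ≤ walkWeight (aug w q) (inr b) p := by
  match p with
  | [] => exact absurd rfl hp
  | inl u :: t =>
    show (q : ℕ∞) ≤ aug w q (inr b) (inl u) + _
    simp only [aug]
    exact le_self_add
  | inr b' :: t =>
    show (q : ℕ∞) ≤ aug w q (inr b) (inr b') + _
    simp only [aug, top_add]
    exact le_top

/-- Any walk from an `inl` vertex ending at an `inr` vertex has weight at least `q`. -/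
lemma weight_to_inr (p : List (V ⊕ Bool)) : ∀ (u : V) (b : Bool),
    ((inl u : V ⊕ Bool) :: p).getLast (List.cons_ne_nil _ _) = inr b →
    (q : ℕ∞) ≤ walkWeight (aug w q) (inl u) p := by
  induction p with
  | nil => intro u b h; simp at h
  | cons a t ih =>
    intro u b h
    rw [List.getLast_cons (List.cons_ne_nil _ _)] at h
    match a with
    | inl u' =>
      show (q : ℕ∞) ≤ aug w q (inl u) (inl u') + walkWeight (aug w q) (inl u') t
      exact le_add_left (ih u' b h)
    | inr b' =>
      show (q : ℕ∞) ≤ aug w q (inl u) (inr b') + _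
      simp only [aug]
      exact le_self_add

/-- A walk in the augmented graph between `inl` vertices either has weight `≥ 2q`
or dominates a walk in the original graph. -/
lemma weight_inl_inl (p : List (V ⊕ Bool)) : ∀ (u v : V),
    ((inl u : V ⊕ Bool) :: p).getLast (List.cons_ne_nil _ _) = inl v →
    ((2 * q : ℕ) : ℕ∞) ≤ walkWeight (aug w q) (inl u) p ∨
    ∃ p' : List V, (u :: p').getLast (List.cons_ne_nil _ _) = v ∧
      walkWeight w u p' ≤ walkWeight (aug w q) (inl u) p := by
  induction p with
  | nil =>
    intro u v h
    simp only [List.getLast_singleton, inl.injEq] at h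
    exact Or.inr ⟨[], by simpa using h, le_rfl⟩
  | cons a t ih =>
    intro u v h
    rw [List.getLast_cons (List.cons_ne_nil _ _)] at h
    match a with
    | inl u' =>
      have hw : walkWeight (aug w q) (inl u) (inl u' :: t) =
          w u u' + walkWeight (aug w q) (inl u') t := rfl
      rcases ih u' v h with h2 | ⟨p', hp', hw'⟩
      · left; rw [hw]; exact le_add_left h2
      · right
        refine ⟨u' :: p', ?_, ?_⟩
        · rw [List.getLast_cons (List.cons_ne_nil _ _)]; exact hp'
        · show w u u' + walkWeight w u' p' ≤ _
          rw [hw]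
          exact add_le_add_right hw' _
    | inr b =>
      left
      have ht : t ≠ [] := by
        rintro rfl
        simp at h
      have h1 : (q : ℕ∞) ≤ walkWeight (aug w q) (inr b) t := weight_from_inr w q b t ht
      have hw : walkWeight (aug w q) (inl u) (inr b :: t) =
          (q : ℕ∞) + walkWeight (aug w q) (inr b) t := rfl
      rw [hw]
      calc ((2 * q : ℕ) : ℕ∞) = (q : ℕ∞) + (q : ℕ∞) := by push_cast; ring
        _ ≤ (q : ℕ∞) + walkWeight (aug w q) (inr b) t := add_le_add_right h1 _

/-- A walk between distinct `inr` vertices has weight at least `2q`. -/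
lemma weight_inr_inr {b b' : Bool} (hbb : b ≠ b') (p : List (V ⊕ Bool))
    (h : ((inr b : V ⊕ Bool) :: p).getLast (List.cons_ne_nil _ _) = inr b') :
    ((2 * q : ℕ) : ℕ∞) ≤ walkWeight (aug w q) (inr b) p := by
  match p with
  | [] =>
    simp only [List.getLast_singleton, inr.injEq] at h
    exact absurd h hbb
  | inl u :: t =>
    rw [List.getLast_cons (List.cons_ne_nil _ _)] at h
    have h1 : (q : ℕ∞) ≤ walkWeight (aug w q) (inl u) t := weight_to_inr w q t u b' h
    have hw : walkWeight (aug w q) (inr b) (inl u :: t) =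
        (q : ℕ∞) + walkWeight (aug w q) (inl u) t := rfl
    rw [hw]
    calc ((2 * q : ℕ) : ℕ∞) = (q : ℕ∞) + (q : ℕ∞) := by push_cast; ring
      _ ≤ _ := add_le_add_right h1 _
  | inr c :: t =>
    have hw : walkWeight (aug w q) (inr b) (inr c :: t) =
        ⊤ + walkWeight (aug w q) (inr c) t := rfl
    rw [hw, top_add]
    exact le_top

lemma gdist_aug_inr_inr_ge {b b' : Bool} (hbb : b ≠ b') :
    ((2 * q : ℕ) : ℕ∞) ≤ gdist (aug w q) (inr b) (inr b') :=
  le_iInf₂ fun p hp => weight_inr_inr w q hbb p hp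

lemma gdist_aug_inl_inl_ge (u v : V) :
    min (gdist w u v) ((2 * q : ℕ) : ℕ∞) ≤ gdist (aug w q) (inl u) (inl v) := by
  refine le_iInf₂ fun p hp => ?_
  rcases weight_inl_inl w q p u v hp with h | ⟨p', hp', hw'⟩
  · exact le_trans (min_le_right _ _) h
  · exact le_trans (min_le_left _ _) (le_trans (gdist_le w p' hp') hw')

lemma ecc_aug_le [Nonempty V] (s : V ⊕ Bool) :
    ecc (aug w q) s ≤ ((2 * q : ℕ) : ℕ∞) := by
  refine iSup_le fun t => ?_
  have hq2 : (q : ℕ∞) ≤ ((2 * q : ℕ) : ℕ∞) := by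
    rw [Nat.cast_le]; omega
  match s, t with
  | inl u, inl v => exact gdist_aug_inl_inl_le w q u v
  | inl u, inr b => exact le_trans (gdist_aug_inl_inr w q u b) hq2
  | inr b, inl v => exact le_trans (gdist_aug_inr_inl w q b v) hq2
  | inr b, inr b' => exact gdist_aug_inr_inr_le w q b b'

lemma ecc_aug_inr [Nonempty V] (b : Bool) :
    ecc (aug w q) (inr b) = ((2 * q : ℕ) : ℕ∞) := by
  refine le_antisymm (ecc_aug_le w q _) ?_
  calc ((2 * q : ℕ) : ℕ∞) ≤ gdist (aug w q) (inr b) (inr (!b)) :=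
        gdist_aug_inr_inr_ge w q (by cases b <;> simp)
    _ ≤ ecc (aug w q) (inr b) := le_iSup _ _

lemma diam_aug [Nonempty V] : diam (aug w q) = ((2 * q : ℕ) : ℕ∞) := by
  refine le_antisymm (iSup_le fun s => ecc_aug_le w q s) ?_
  rw [← ecc_aug_inr w q false]
  exact le_iSup _ _

end Aux

theorem stmt3 {V : Type*} [Fintype V] [Nonempty V] (w : V → V → ℕ∞) (q : ℕ) (hq : 1 ≤ q) :
    rad w < ((2 * q : ℕ) : ℕ∞) ↔
      ∃ p : V ⊕ Bool, ecc (aug w q) p ≠ diam (aug w q) := by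
  open Sum in
  constructor
  · intro h
    rw [rad, iInf_lt_iff] at h
    obtain ⟨v, hv⟩ := h
    refine ⟨inl v, ?_⟩
    rw [diam_aug w q]
    have hqlt : (q : ℕ∞) < ((2 * q : ℕ) : ℕ∞) := by
      rw [Nat.cast_lt]; omega
    have hecc : ecc (aug w q) (inl v) < ((2 * q : ℕ) : ℕ∞) := by
      have : ecc (aug w q) (inl v) ≤ max (q : ℕ∞) (ecc w v) := by
        refine iSup_le fun t => ?_
        match t with
        | inl u =>
          exact le_trans (le_trans (gdist_aug_inl_le w q v u) (le_iSup _ u)) (le_max_right _ _)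
        | inr b =>
          exact le_trans (gdist_aug_inl_inr w q v b) (le_max_left _ _)
      exact lt_of_le_of_lt this (max_lt hqlt hv)
    exact ne_of_lt hecc
  · rintro ⟨p, hp⟩
    rw [diam_aug w q] at hp
    match p with
    | Sum.inl v =>
      have hlt : ecc (aug w q) (Sum.inl v) < ((2 * q : ℕ) : ℕ∞) :=
        lt_of_le_of_ne (ecc_aug_le w q _) hp
      have hecc : ecc w v < ((2 * q : ℕ) : ℕ∞) := by
        have : ecc w v ≤ ecc (aug w q) (Sum.inl v) := by
          refine iSup_le fun u => ?_
          have h1 : min (gdist w v u) ((2 * q : ℕ) : ℕ∞) ≤ ecc (aug w q) (Sum.inl v) :=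
            le_trans (gdist_aug_inl_inl_ge w q v u) (le_iSup _ (Sum.inl u))
          rcases min_le_iff.mp h1 with h2 | h2
          · exact h2
          · exact absurd (lt_of_le_of_lt h2 hlt) (lt_irrefl _)
        exact lt_of_le_of_lt this hlt
      calc rad w ≤ ecc w v := iInf_le _ v
        _ < _ := hecc
    | Sum.inr b =>
      exact absurd (ecc_aug_inr w q b) hp
end

section
/- Let V be a finite type with at least two elements, w : V → V → ℕ∞, d : ℕ, and let w^{≤d} be the capped graph on V. Then ⨆_{u ≠ v} dist_{w^{≤d}}(u,v) = min(⨆_{u ≠ v} dist_w(u,v), d); in particular the diameter of the capped graph is at most d. -/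
/-- Capped graph: add an edge of weight `d` between every ordered pair of distinct vertices. -/
noncomputable def capped {V : Type*} [DecidableEq V] (w : V → V → ℕ∞) (d : ℕ) : V → V → ℕ∞ :=
  fun u v => if u = v then w u v else min (w u v) (d : ℕ∞)

private lemma walkWeight_mono {V : Type*} {w w' : V → V → ℕ∞} (h : ∀ a b, w' a b ≤ w a b) :
    ∀ (u : V) (p : List V), walkWeight w' u p ≤ walkWeight w u p
  | _, [] => le_refl _
  | u, x :: xs => add_le_add (h u x) (walkWeight_mono h x xs)

private lemma min_add_min {a b d : ℕ∞} : min (a + b) d ≤ min a d + min b d := by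
  rcases min_cases a d with ⟨ha, _⟩ | ⟨ha, had⟩
  · rcases min_cases b d with ⟨hb, _⟩ | ⟨hb, hbd⟩
    · rw [ha, hb]; exact min_le_left _ _
    · rw [ha, hb]; exact le_trans (min_le_right _ _) le_add_self
  · rw [ha]; exact le_trans (min_le_right _ _) le_self_add

private lemma walkWeight_capped {V : Type*} [DecidableEq V] (w : V → V → ℕ∞) (d : ℕ) :
    ∀ (u : V) (p : List V), min (walkWeight w u p) (d : ℕ∞) ≤ walkWeight (capped w d) u p
  | _, [] => by simp [walkWeight]
  | u, x :: xs => by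
    have h1 : min (w u x) (d : ℕ∞) ≤ capped w d u x := by
      unfold capped; split <;> simp
    calc min (walkWeight w u (x :: xs)) (d : ℕ∞)
        ≤ min (w u x) (d : ℕ∞) + min (walkWeight w x xs) (d : ℕ∞) := min_add_min
      _ ≤ capped w d u x + walkWeight (capped w d) x xs :=
          add_le_add h1 (walkWeight_capped w d x xs)
      _ = walkWeight (capped w d) u (x :: xs) := rfl

private lemma gdist_capped {V : Type*} [DecidableEq V] (w : V → V → ℕ∞) (d : ℕ)
    {u v : V} (huv : u ≠ v) : gdist (capped w d) u v = min (gdist w u v) (d : ℕ∞) := by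
  apply le_antisymm
  · refine le_min ?_ ?_
    · exact iInf_mono fun p => iInf_mono fun _ =>
        walkWeight_mono (fun a b => by unfold capped; split <;> simp) u p
    · refine le_trans (iInf₂_le [v] (by simp)) ?_
      simp only [walkWeight, add_zero]
      unfold capped
      rw [if_neg huv]
      exact min_le_right _ _
  · refine le_iInf₂ fun p hp => ?_
    exact le_trans (min_le_min_right _ (iInf₂_le p hp)) (walkWeight_capped w d u p)

theorem stmt10 {V : Type*} [Fintype V] [DecidableEq V] [Nontrivial V]
    (w : V → V → ℕ∞) (d : ℕ) :
    (⨆ (u : V) (v : V) (_ : u ≠ v), gdist (capped w d) u v) =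
        min (⨆ (u : V) (v : V) (_ : u ≠ v), gdist w u v) (d : ℕ∞) ∧
      (⨆ (u : V) (v : V) (_ : u ≠ v), gdist (capped w d) u v) ≤ (d : ℕ∞) := by
  have key : (⨆ (u : V) (v : V) (_ : u ≠ v), gdist (capped w d) u v) =
      min (⨆ (u : V) (v : V) (_ : u ≠ v), gdist w u v) (d : ℕ∞) := by
    have : ∀ x : ℕ∞, min x (d : ℕ∞) = x ⊓ (d : ℕ∞) := fun _ => rfl
    rw [this, iSup_inf_eq]
    refine iSup_congr fun u => ?_
    rw [iSup_inf_eq]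
    refine iSup_congr fun v => ?_
    rw [iSup_inf_eq]
    exact iSup_congr fun huv => gdist_capped w d huv
  exact ⟨key, key ▸ min_le_right _ _⟩
end
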